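/- Let S be an infinite set of monic polynomials in R = 𝔽_q[x]. Then for every dimension m ∈ ℕ, every n ∈ ℕ, every N ∈ R with deg N = n, and every integer k with 0 ≤ k ≤ m_S(n), the uniform probability that a ∈ R_{<n}^m satisfies d_{N,S}(a) = k equals ν_m({α ∈ 𝔪^m : deg_{min,S}(α, q^{−n}) = k}). -/

import Mathlib

open Polynomial MeasureTheory
open scoped Classical ENNReal NNReal
set_option linter.unusedSectionVars false

/- Setting: `Fq` is a finite field with `q` elements (`q` a prime power),
`R = Fq[x]`, and `K_∞ = Fq((x⁻¹))` is realized as the field `LaurentSeries Fq`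
of formal Laurent series in the variable `u = x⁻¹`. -/

variable (Fq : Type) [Field Fq] [Fintype Fq] [DecidableEq Fq]

/-- `K_∞ = 𝔽_q((x⁻¹))`, realized as Laurent series in the variable `u = x⁻¹`. -/
abbrev Kinf := LaurentSeries Fq

/-- The embedding of `R = 𝔽_q[x]` into `K_∞`, sending `x` to `u⁻¹`. -/
noncomputable def emb : Polynomial Fq →+* Kinf Fq :=
  (Polynomial.aeval ((HahnSeries.single (-1 : ℤ) (1 : Fq)) : LaurentSeries Fq)).toRingHom

/-- `q`, as a nonnegative real number. -/
noncomputable def qc : NNReal := (Fintype.card Fq : NNReal)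

/-- The absolute value `|α| = q^{-ord(α)}` on `K_∞` (so that `|f| = q^{deg f}` for a nonzero
polynomial `f ∈ 𝔽_q[x]`, since `f(u⁻¹)` has order `-deg f` as a Laurent series in `u`). -/
noncomputable def fabs (α : Kinf Fq) : NNReal :=
  if α = 0 then 0 else (qc Fq) ^ (-(HahnSeries.order α))

/-- The sup norm `‖v‖ = max_i |v_i|` on `K_∞^m`. -/
noncomputable def vnorm {m : ℕ} (v : Fin m → Kinf Fq) : NNReal :=
  Finset.univ.sup fun i => fabs Fq (v i)

/-- The maximal ideal `𝔪 = {α ∈ K_∞ : |α| ≤ q⁻¹}`. -/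
noncomputable def mfrak : Set (Kinf Fq) := {α | fabs Fq α ≤ (qc Fq)⁻¹}

/-- `𝔪^m ⊆ K_∞^m`. -/
noncomputable def mfrakV (m : ℕ) : Set (Fin m → Kinf Fq) := {α | ∀ i, α i ∈ mfrak Fq}

/-- `(P, Q)` is a primitive vector of `R^{m+1}`, i.e. `gcd(P₁, …, P_m, Q) = 1`:
every common divisor is a unit. -/
def Primitive {m : ℕ} (P : Fin m → Polynomial Fq) (Q : Polynomial Fq) : Prop :=
  ∀ d : Polynomial Fq, d ∣ Q → (∀ i, d ∣ P i) → IsUnit d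

/-- The point `P/Q ∈ K_∞^m` determined by `P ∈ R^m` and `Q ∈ R`. -/
noncomputable def ratV {m : ℕ} (P : Fin m → Polynomial Fq) (Q : Polynomial Fq) :
    Fin m → Kinf Fq := fun i => emb Fq (P i) / emb Fq Q

/-- `deg_{min,S}(α, q^{-n})`: the least `d` such that there is `(P,Q) ∈ R̂^{m+1}` with
`Q ∈ S`, `deg Q = d`, `‖P‖ < |Q|` and `‖α - P/Q‖ < q^{-n}`. -/
noncomputable def degMin (S : Set (Polynomial Fq)) (m n : ℕ) (α : Fin m → Kinf Fq) : ℕ :=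
  sInf {d : ℕ | ∃ (P : Fin m → Polynomial Fq) (Q : Polynomial Fq),
    Q ∈ S ∧ Q.natDegree = d ∧ Primitive Fq P Q ∧
    vnorm Fq (ratV Fq P 1) < fabs Fq (emb Fq Q) ∧
    vnorm Fq (α - ratV Fq P Q) < (qc Fq) ^ (-(n : ℤ))}

/-- `m_S(n) = min {k ≥ n : S ∩ R_{=k} ≠ ∅}`. -/
noncomputable def mS (S : Set (Polynomial Fq)) (n : ℕ) : ℕ :=
  sInf {k : ℕ | n ≤ k ∧ ∃ Q ∈ S, Q.natDegree = k}

/-- `d_{N,S}(a) = deg_{min,S}(a/N, q^{-deg N})`. -/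
noncomputable def dN (S : Set (Polynomial Fq)) (m : ℕ) (N : Polynomial Fq)
    (a : Fin m → Polynomial Fq) : ℕ :=
  degMin Fq S m N.natDegree (ratV Fq a N)

/-- `R_{<n}^m`, the set of vectors of polynomials of degree `< n`. -/
def polyVecLT (m n : ℕ) : Set (Fin m → Polynomial Fq) :=
  {a | ∀ i, (a i).degree < (n : ℕ)}

/-- The `S`-Farey fractions of degree at most `k` in `K_∞^m` (the zero vector is
included, as the fraction `0/1`). -/
noncomputable def Farey (S : Set (Polynomial Fq)) (m k : ℕ) : Set (Fin m → Kinf Fq) :=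
  {x | ∃ (P : Fin m → Polynomial Fq) (Q : Polynomial Fq), Q ∈ S ∧ Primitive Fq P Q ∧
    vnorm Fq (ratV Fq P 1) < fabs Fq (emb Fq Q) ∧ Q.natDegree ≤ k ∧ x = ratV Fq P Q}

/-- The (closed) ball `B(v, r) = {u ∈ K_∞^m : ‖v - u‖ ≤ r}`. -/
noncomputable def ball {m : ℕ} (v : Fin m → Kinf Fq) (r : NNReal) : Set (Fin m → Kinf Fq) :=
  {u | vnorm Fq (v - u) ≤ r}

/-- `Q` is the (unique monic) `S`-minimal denominator for `(α, q^{-n})`, i.e.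
`Q_{min,S}(α, q^{-n}) = Q`: `Q ∈ S`, `deg Q = deg_{min,S}(α, q^{-n})`, and there is
`P ∈ R^m` with `(P,Q) ∈ R̂^{m+1}` and `‖α - P/Q‖ < q^{-n}`. -/
noncomputable def IsMinDenom (S : Set (Polynomial Fq)) (m n : ℕ) (α : Fin m → Kinf Fq)
    (Q : Polynomial Fq) : Prop :=
  Q ∈ S ∧ Q.natDegree = degMin Fq S m n α ∧
    ∃ P : Fin m → Polynomial Fq, Primitive Fq P Q ∧
      vnorm Fq (α - ratV Fq P Q) < (qc Fq) ^ (-(n : ℤ))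


/-! ### Auxiliary lemmas -/

section Aux

lemma one_lt_qc : 1 < qc Fq := by
  have h : 1 < Fintype.card Fq := Fintype.one_lt_card
  unfold qc; exact_mod_cast h

lemma qc_pos : 0 < qc Fq := lt_trans zero_lt_one (one_lt_qc Fq)

lemma qc_ne_zero : qc Fq ≠ 0 := (qc_pos Fq).ne'

lemma fabs_zero : fabs Fq 0 = 0 := if_pos rfl

lemma fabs_of_ne {α : Kinf Fq} (h : α ≠ 0) : fabs Fq α = qc Fq ^ (-α.order) := if_neg h

lemma fabs_eq_zero {α : Kinf Fq} : fabs Fq α = 0 ↔ α = 0 := by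
  constructor
  · intro h
    by_contra hα
    rw [fabs_of_ne Fq hα] at h
    exact zpow_ne_zero _ (qc_ne_zero Fq) h
  · rintro rfl; exact fabs_zero Fq

lemma fabs_le_pow_iff {α : Kinf Fq} {j : ℤ} :
    fabs Fq α ≤ qc Fq ^ (-j) ↔ ∀ d : ℤ, d < j → α.coeff d = 0 := by
  rcases eq_or_ne α 0 with rfl | h
  · simp [fabs_zero]
  · rw [fabs_of_ne Fq h, zpow_le_zpow_iff_right₀ (one_lt_qc Fq), neg_le_neg_iff]
    constructor
    · intro hj d hd
      exact HahnSeries.coeff_eq_zero_of_lt_order (lt_of_lt_of_le hd hj)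
    · intro hc
      by_contra hlt
      push_neg at hlt
      exact HahnSeries.coeff_order_eq_zero.not.mpr h (hc _ hlt)

lemma fabs_lt_pow_iff {α : Kinf Fq} {j : ℤ} :
    fabs Fq α < qc Fq ^ (-j) ↔ fabs Fq α ≤ qc Fq ^ (-(j + 1)) := by
  rcases eq_or_ne α 0 with rfl | h
  · simp only [fabs_zero]
    constructor
    · intro _; exact zero_le
    · intro _
      exact zpow_pos (qc_pos Fq) _
  · rw [fabs_of_ne Fq h, zpow_lt_zpow_iff_right₀ (one_lt_qc Fq),
      zpow_le_zpow_iff_right₀ (one_lt_qc Fq)]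
    omega

lemma fabs_neg (α : Kinf Fq) : fabs Fq (-α) = fabs Fq α := by
  unfold fabs
  rw [HahnSeries.order_neg, neg_eq_zero]

lemma fabs_add_le (a b : Kinf Fq) : fabs Fq (a + b) ≤ max (fabs Fq a) (fabs Fq b) := by
  rcases eq_or_ne (a + b) 0 with h | h
  · rw [h, fabs_zero]; exact zero_le
  rcases eq_or_ne a 0 with rfl | ha
  · simp
  rcases eq_or_ne b 0 with rfl | hb
  · simp
  have hmin := HahnSeries.min_order_le_order_add h
  rw [fabs_of_ne Fq h, fabs_of_ne Fq ha, fabs_of_ne Fq hb]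
  rcases le_total a.order b.order with hab | hab
  · refine le_max_of_le_left ?_
    rw [zpow_le_zpow_iff_right₀ (one_lt_qc Fq)]
    have : a.order ≤ (a + b).order := le_trans (by simp [hab]) hmin
    omega
  · refine le_max_of_le_right ?_
    rw [zpow_le_zpow_iff_right₀ (one_lt_qc Fq)]
    have : b.order ≤ (a + b).order := le_trans (by simp [hab]) hmin
    omega

lemma fabs_mul (a b : Kinf Fq) : fabs Fq (a * b) = fabs Fq a * fabs Fq b := by
  rcases eq_or_ne a 0 with rfl | ha
  · simp [fabs_zero]
  rcases eq_or_ne b 0 with rfl | hb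
  · simp [fabs_zero]
  have hab : a * b ≠ 0 := mul_ne_zero ha hb
  rw [fabs_of_ne Fq hab, fabs_of_ne Fq ha, fabs_of_ne Fq hb,
    HahnSeries.order_mul ha hb, neg_add, zpow_add₀ (qc_ne_zero Fq)]

lemma fabs_div (a b : Kinf Fq) : fabs Fq (a / b) = fabs Fq a / fabs Fq b := by
  rcases eq_or_ne b 0 with rfl | hb
  · simp [fabs_zero]
  have hfb : fabs Fq b ≠ 0 := fun h => hb ((fabs_eq_zero Fq).mp h)
  rw [eq_div_iff hfb, ← fabs_mul, div_mul_cancel₀ _ hb]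

lemma emb_monomial (j : ℕ) (c : Fq) :
    emb Fq (Polynomial.monomial j c) = HahnSeries.single (-(j : ℤ)) c := by
  show Polynomial.aeval ((HahnSeries.single (-1 : ℤ) (1 : Fq)) : LaurentSeries Fq)
      (Polynomial.monomial j c) = _
  rw [Polynomial.aeval_monomial, HahnSeries.single_pow,
    show (j • (-1 : ℤ)) = -(j : ℤ) by simp [nsmul_eq_mul],
    HahnSeries.algebraMap_apply',
    show (algebraMap Fq (PowerSeries Fq)) c = PowerSeries.C c from rfl,
    HahnSeries.ofPowerSeries_C, HahnSeries.C_apply, one_pow,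
    HahnSeries.single_mul_single, zero_add, mul_one]

lemma emb_coeff (f : Polynomial Fq) (d : ℤ) :
    (emb Fq f).coeff d = if d ≤ 0 then f.coeff (-d).toNat else 0 := by
  induction f using Polynomial.induction_on' with
  | add p q hp hq =>
    rw [map_add, HahnSeries.coeff_add, hp, hq, Polynomial.coeff_add]
    split_ifs with h
    · rfl
    · rw [add_zero]
  | monomial j c =>
    rw [emb_monomial]
    simp only [HahnSeries.coeff_single, Polynomial.coeff_monomial]
    by_cases h1 : d = -(j : ℤ)
    · rw [if_pos h1, if_pos (by omega), if_pos (by omega)]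
    · rw [if_neg h1]
      by_cases h2 : d ≤ 0
      · rw [if_pos h2, if_neg (by omega)]
      · rw [if_neg h2]

lemma emb_coeff_natCast (f : Polynomial Fq) (j : ℕ) :
    (emb Fq f).coeff (-(j : ℤ)) = f.coeff j := by
  rw [emb_coeff, if_pos (by omega)]
  congr 1
  omega

lemma emb_ne_zero {f : Polynomial Fq} (hf : f ≠ 0) : emb Fq f ≠ 0 := fun h =>
  Polynomial.leadingCoeff_ne_zero.mpr hf
    (by rw [Polynomial.leadingCoeff, ← emb_coeff_natCast Fq f f.natDegree, h,
      HahnSeries.coeff_zero])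

lemma emb_order {f : Polynomial Fq} (hf : f ≠ 0) : (emb Fq f).order = -(f.natDegree : ℤ) := by
  apply le_antisymm
  · apply HahnSeries.order_le_of_coeff_ne_zero
    rw [emb_coeff_natCast]
    exact Polynomial.leadingCoeff_ne_zero.mpr hf
  · by_contra hlt
    push_neg at hlt
    apply HahnSeries.coeff_order_eq_zero.not.mpr (emb_ne_zero Fq hf)
    rw [emb_coeff, if_pos (by omega)]
    apply Polynomial.coeff_eq_zero_of_natDegree_lt
    omega

lemma fabs_emb {f : Polynomial Fq} (hf : f ≠ 0) :
    fabs Fq (emb Fq f) = qc Fq ^ (f.natDegree : ℤ) := by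
  rw [fabs_of_ne Fq (emb_ne_zero Fq hf), emb_order Fq hf, neg_neg]

lemma one_le_fabs_emb {f : Polynomial Fq} (hf : f ≠ 0) : 1 ≤ fabs Fq (emb Fq f) := by
  rw [fabs_emb Fq hf]
  calc (1 : NNReal) = qc Fq ^ (0 : ℤ) := (zpow_zero _).symm
  _ ≤ _ := by rw [zpow_le_zpow_iff_right₀ (one_lt_qc Fq)]; omega

lemma fabs_emb_lt {f : Polynomial Fq} {n : ℕ} (h : f.degree < (n : ℕ)) :
    fabs Fq (emb Fq f) < qc Fq ^ (n : ℤ) := by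
  rcases eq_or_ne f 0 with rfl | hf
  · rw [map_zero, fabs_zero]
    exact zpow_pos (qc_pos Fq) _
  · rw [fabs_emb Fq hf, zpow_lt_zpow_iff_right₀ (one_lt_qc Fq)]
    exact_mod_cast (Polynomial.natDegree_lt_iff_degree_lt hf).mpr h

lemma vnorm_le_iff {m : ℕ} {v : Fin m → Kinf Fq} {r : NNReal} :
    vnorm Fq v ≤ r ↔ ∀ i, fabs Fq (v i) ≤ r := by
  unfold vnorm
  rw [Finset.sup_le_iff]
  simp

lemma fabs_le_vnorm {m : ℕ} (v : Fin m → Kinf Fq) (i : Fin m) :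
    fabs Fq (v i) ≤ vnorm Fq v := by
  unfold vnorm
  exact Finset.le_sup (f := fun i => fabs Fq (v i)) (Finset.mem_univ i)

lemma vnorm_lt_pow_iff {m : ℕ} {v : Fin m → Kinf Fq} {j : ℤ} :
    vnorm Fq v < qc Fq ^ (-j) ↔ vnorm Fq v ≤ qc Fq ^ (-(j + 1)) := by
  constructor
  · intro h
    exact (vnorm_le_iff Fq).mpr fun i =>
      (fabs_lt_pow_iff Fq).mp ((fabs_le_vnorm Fq v i).trans_lt h)
  · intro h
    refine h.trans_lt ?_
    rw [zpow_lt_zpow_iff_right₀ (one_lt_qc Fq)]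
    omega

lemma vnorm_sub_comm {m : ℕ} (x y : Fin m → Kinf Fq) :
    vnorm Fq (x - y) = vnorm Fq (y - x) := by
  unfold vnorm
  congr 1
  funext i
  rw [show (x - y) i = -((y - x) i) by simp, fabs_neg]

lemma vnorm_sub_le_max {m : ℕ} (x y z : Fin m → Kinf Fq) :
    vnorm Fq (x - z) ≤ max (vnorm Fq (x - y)) (vnorm Fq (y - z)) := by
  refine (vnorm_le_iff Fq).mpr fun i => ?_
  have h : (x - z) i = (x - y) i + (y - z) i := by
    simp only [Pi.sub_apply]
    ring
  rw [h]
  exact (fabs_add_le Fq _ _).trans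
    (max_le_max (fabs_le_vnorm Fq _ _) (fabs_le_vnorm Fq _ _))

lemma approx_trans {m n : ℕ} {α α' r : Fin m → Kinf Fq}
    (h : vnorm Fq (α - α') ≤ qc Fq ^ (-((n : ℤ) + 1)))
    (h2 : vnorm Fq (α - r) < qc Fq ^ (-(n : ℤ))) :
    vnorm Fq (α' - r) < qc Fq ^ (-(n : ℤ)) := by
  rw [vnorm_lt_pow_iff Fq] at h2 ⊢
  exact (vnorm_sub_le_max Fq α' α r).trans
    (max_le (by rwa [vnorm_sub_comm Fq]) h2)

lemma degMin_congr (S : Set (Polynomial Fq)) {m n : ℕ} {α α' : Fin m → Kinf Fq}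
    (h : vnorm Fq (α - α') ≤ qc Fq ^ (-((n : ℤ) + 1))) :
    degMin Fq S m n α = degMin Fq S m n α' := by
  have h' : vnorm Fq (α' - α) ≤ qc Fq ^ (-((n : ℤ) + 1)) := by
    rwa [vnorm_sub_comm Fq]
  unfold degMin
  congr 1
  ext d
  simp only [Set.mem_setOf_eq]
  constructor
  · rintro ⟨P, Q, h1, h2, h3, h4, h5⟩
    exact ⟨P, Q, h1, h2, h3, h4, approx_trans Fq h h5⟩
  · rintro ⟨P, Q, h1, h2, h3, h4, h5⟩
    exact ⟨P, Q, h1, h2, h3, h4, approx_trans Fq h' h5⟩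

lemma exists_center {n : ℕ} {N : Polynomial Fq} (hN : N.degree = (n : ℕ))
    {β : Kinf Fq} (hβ : fabs Fq β ≤ (qc Fq)⁻¹) :
    ∃ a : Polynomial Fq, a.degree < (n : ℕ) ∧
      fabs Fq (β - emb Fq a / emb Fq N) ≤ qc Fq ^ (-((n : ℤ) + 1)) := by
  have hN0 : N ≠ 0 := fun h => by simp [h] at hN
  have hNd : N.natDegree = n := Polynomial.natDegree_eq_of_degree_eq_some hN
  have hNe : emb Fq N ≠ 0 := emb_ne_zero Fq hN0
  set γ : Kinf Fq := β * emb Fq N with hγ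
  have hγle : fabs Fq γ ≤ qc Fq ^ (-(1 - (n : ℤ))) := by
    rw [hγ, fabs_mul, fabs_emb Fq hN0, hNd]
    calc fabs Fq β * qc Fq ^ (n : ℤ) ≤ (qc Fq)⁻¹ * qc Fq ^ (n : ℤ) :=
        mul_le_mul_left hβ _
    _ = qc Fq ^ (-(1 - (n : ℤ))) := by
        rw [← zpow_neg_one, ← zpow_add₀ (qc_ne_zero Fq)]
        congr 1
        ring
  have hγc : ∀ d : ℤ, d < 1 - (n : ℤ) → γ.coeff d = 0 := (fabs_le_pow_iff Fq).mp hγle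
  set a : Polynomial Fq :=
    ∑ j ∈ Finset.range n, Polynomial.monomial j (γ.coeff (-(j : ℤ))) with ha
  have hacoeff : ∀ k : ℕ, a.coeff k = if k < n then γ.coeff (-(k : ℤ)) else 0 := by
    intro k
    rw [ha, Polynomial.finset_sum_coeff]
    simp only [Polynomial.coeff_monomial]
    rw [Finset.sum_ite_eq' (Finset.range n) k (fun j => γ.coeff (-(j : ℤ)))]
    simp [Finset.mem_range]
  have hadeg : a.degree < (n : ℕ) := by
    apply Polynomial.degree_lt_iff_coeff_zero a n |>.mpr
    intro k hk
    rw [hacoeff k, if_neg (by exact_mod_cast not_lt.mpr (by exact_mod_cast hk))]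
  have hsub : ∀ d : ℤ, d < 1 → (γ - emb Fq a).coeff d = 0 := by
    intro d hd
    rw [HahnSeries.coeff_sub, emb_coeff, if_pos (by omega), sub_eq_zero]
    rw [hacoeff]
    by_cases hdn : (-d).toNat < n
    · rw [if_pos hdn]
      congr 1
      omega
    · rw [if_neg hdn]
      exact hγc d (by omega)
  refine ⟨a, hadeg, ?_⟩
  have h1 : β - emb Fq a / emb Fq N = (γ - emb Fq a) / emb Fq N := by
    rw [hγ, sub_div, mul_div_cancel_right₀ _ hNe]
  have h2 : fabs Fq (γ - emb Fq a) ≤ qc Fq ^ (-(1 : ℤ)) := (fabs_le_pow_iff Fq).mpr hsub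
  rw [h1, fabs_div, fabs_emb Fq hN0, hNd,
    div_le_iff₀ (zpow_pos (qc_pos Fq) _)]
  refine le_trans h2 (le_of_eq ?_)
  rw [← zpow_add₀ (qc_ne_zero Fq)]
  congr 1
  ring

lemma centers_apart {n : ℕ} {N : Polynomial Fq} (hN : N.degree = (n : ℕ))
    {a b : Polynomial Fq} (hab : a ≠ b) :
    ¬ fabs Fq (emb Fq a / emb Fq N - emb Fq b / emb Fq N) ≤ qc Fq ^ (-((n : ℤ) + 1)) := by
  have hN0 : N ≠ 0 := fun h => by simp [h] at hN
  have hNd : N.natDegree = n := Polynomial.natDegree_eq_of_degree_eq_some hN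
  intro h
  rw [div_sub_div_same, ← map_sub, fabs_div, fabs_emb Fq hN0, hNd,
    div_le_iff₀ (zpow_pos (qc_pos Fq) _)] at h
  have h1 : (1 : NNReal) ≤ fabs Fq (emb Fq (a - b)) :=
    one_le_fabs_emb Fq (sub_ne_zero.mpr hab)
  have h2 : fabs Fq (emb Fq (a - b)) ≤ qc Fq ^ (-(1 : ℤ)) := by
    refine h.trans (le_of_eq ?_)
    rw [← zpow_add₀ (qc_ne_zero Fq)]
    congr 1
    ring
  have h3 : (1 : NNReal) ≤ qc Fq ^ (-(1 : ℤ)) := le_trans h1 h2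
  rw [show (1 : NNReal) = qc Fq ^ (0 : ℤ) from (zpow_zero _).symm,
    zpow_le_zpow_iff_right₀ (one_lt_qc Fq)] at h3
  omega

lemma ball_in_mfrak {n : ℕ} {N : Polynomial Fq} (hN : N.degree = (n : ℕ))
    {a : Polynomial Fq} (hadeg : a.degree < (n : ℕ)) {β : Kinf Fq}
    (h : fabs Fq (β - emb Fq a / emb Fq N) ≤ qc Fq ^ (-((n : ℤ) + 1))) :
    fabs Fq β ≤ (qc Fq)⁻¹ := by
  have hN0 : N ≠ 0 := fun h => by simp [h] at hN
  have hNd : N.natDegree = n := Polynomial.natDegree_eq_of_degree_eq_some hN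
  have hc : fabs Fq (emb Fq a / emb Fq N) ≤ (qc Fq)⁻¹ := by
    rw [fabs_div, fabs_emb Fq hN0, hNd, ← zpow_neg_one,
      div_le_iff₀ (zpow_pos (qc_pos Fq) _), ← zpow_add₀ (qc_ne_zero Fq)]
    have h0 : fabs Fq (emb Fq a) < qc Fq ^ (-(-(n : ℤ))) := by
      rw [neg_neg]
      exact fabs_emb_lt Fq hadeg
    refine ((fabs_lt_pow_iff Fq).mp h0).trans (le_of_eq ?_)
    congr 1
    ring
  have hβ : β = (β - emb Fq a / emb Fq N) + emb Fq a / emb Fq N := by ring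
  rw [hβ]
  refine (fabs_add_le Fq _ _).trans (max_le ?_ hc)
  refine h.trans ?_
  rw [← zpow_neg_one, zpow_le_zpow_iff_right₀ (one_lt_qc Fq)]
  omega

end Aux


section MeasureAux

/-- The closed ball `{|β| ≤ q^{-i}}` in `K_∞`. -/
def Mset (i : ℤ) : Set (Kinf Fq) := {β | fabs Fq β ≤ qc Fq ^ (-i)}

lemma mem_Mset_iff {i : ℤ} {β : Kinf Fq} :
    β ∈ Mset Fq i ↔ ∀ d : ℤ, d < i → β.coeff d = 0 := fabs_le_pow_iff Fq

lemma isOpen_Mset (i : ℤ) : IsOpen (Mset Fq i) := by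
  have hset : Mset Fq i = {β : Kinf Fq | Valued.v.restrict β ≤
      Valued.v.restrict (HahnSeries.single i (1 : Fq) : Kinf Fq)} := by
    ext β
    rw [Set.mem_setOf_eq, mem_Mset_iff Fq, Valuation.restrict_le_iff,
      LaurentSeries.valuation_single_zpow, ← LaurentSeries.valuation_le_iff_coeff_lt_eq_zero Fq]
  rw [hset]
  refine Valued.isOpen_closedBall _ ?_
  rw [ne_eq, Valuation.restrict_eq_zero_iff, Valuation.zero_iff]
  exact HahnSeries.single_ne_zero one_ne_zero

lemma Mset_partition (i : ℤ) :
    Mset Fq i = ⋃ c : Fq, (fun β => HahnSeries.single i c + β) '' Mset Fq (i + 1) := by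
  ext β
  simp only [Set.mem_iUnion, Set.mem_image]
  constructor
  · intro hβ
    refine ⟨β.coeff i, β - HahnSeries.single i (β.coeff i),
      (mem_Mset_iff Fq).mpr fun d hd => ?_, by ring⟩
    rw [HahnSeries.coeff_sub, HahnSeries.coeff_single]
    rcases eq_or_ne d i with rfl | hne
    · rw [if_pos rfl, sub_self]
    · rw [if_neg hne, sub_zero]
      exact (mem_Mset_iff Fq).mp hβ d (by omega)
  · rintro ⟨c, mm, hm, rfl⟩
    refine (mem_Mset_iff Fq).mpr fun d hd => ?_
    rw [HahnSeries.coeff_add, HahnSeries.coeff_single, if_neg (by omega), zero_add]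
    exact (mem_Mset_iff Fq).mp hm d (by omega)

lemma Mset_disjoint (i : ℤ) : Pairwise (Function.onFun Disjoint
    fun c : Fq => (fun β => HahnSeries.single i c + β) '' Mset Fq (i + 1)) := by
  intro c c' hcc
  rw [Function.onFun, Set.disjoint_left]
  rintro β ⟨mm, hm, rfl⟩ ⟨mm', hm', heq⟩
  apply hcc
  have h1 : (HahnSeries.single i c + mm).coeff i = c := by
    rw [HahnSeries.coeff_add, HahnSeries.coeff_single_same,
      (mem_Mset_iff Fq).mp hm i (by omega), add_zero]
  have h2 : (HahnSeries.single i c' + mm').coeff i = c' := by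
    rw [HahnSeries.coeff_add, HahnSeries.coeff_single_same,
      (mem_Mset_iff Fq).mp hm' i (by omega), add_zero]
  have h3 := congrArg (fun x : Kinf Fq => x.coeff i) heq
  simp only at h3
  rw [h2, h1] at h3
  exact h3.symm

variable [MeasurableSpace (Kinf Fq)] [BorelSpace (Kinf Fq)]

lemma measurableSet_Mset (i : ℤ) : MeasurableSet (Mset Fq i) :=
  (isOpen_Mset Fq i).measurableSet

lemma measure_Mset (ν : Measure (Kinf Fq)) [ν.IsAddLeftInvariant]
    (hν : ν (mfrak Fq) = 1) (j : ℕ) :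
    ν (Mset Fq ((j : ℤ) + 1)) = ((Fintype.card Fq : ℝ≥0∞))⁻¹ ^ j := by
  induction j with
  | zero =>
    simp only [Nat.cast_zero, zero_add, pow_zero]
    have hMm : Mset Fq 1 = mfrak Fq := by
      unfold Mset mfrak
      ext β
      rw [Set.mem_setOf_eq, Set.mem_setOf_eq, show -(1 : ℤ) = (-1 : ℤ) by ring, zpow_neg_one]
    rw [hMm, hν]
  | succ j ih =>
    have hmeas : ∀ c : Fq, MeasurableSet
        ((fun β => HahnSeries.single ((j:ℤ)+1) c + β) '' Mset Fq (((j:ℤ)+1) + 1)) := by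
      intro c
      rw [Set.image_add_left]
      exact (measurableSet_Mset Fq _).preimage (measurable_const_add _)
    have hcount : ν (Mset Fq ((j:ℤ)+1)) =
        (Fintype.card Fq : ℝ≥0∞) * ν (Mset Fq ((j:ℤ)+2)) := by
      rw [Mset_partition Fq ((j:ℤ)+1), measure_iUnion (Mset_disjoint Fq _) hmeas]
      have himg : ∀ c : Fq,
          ν ((fun β => HahnSeries.single ((j:ℤ)+1) c + β) '' Mset Fq (((j:ℤ)+1) + 1))
            = ν (Mset Fq ((j:ℤ)+2)) := by
        intro c
        rw [Set.image_add_left, measure_preimage_add,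
          show (j:ℤ) + 1 + 1 = (j:ℤ) + 2 by ring]
      simp_rw [himg]
      rw [tsum_fintype, Finset.sum_const, Finset.card_univ, nsmul_eq_mul]
    have hcard0 : (Fintype.card Fq : ℝ≥0∞) ≠ 0 := Nat.cast_ne_zero.mpr Fintype.card_ne_zero
    have hcardtop : (Fintype.card Fq : ℝ≥0∞) ≠ ⊤ := ENNReal.natCast_ne_top _
    have hcast : ((j + 1 : ℕ) : ℤ) + 1 = (j:ℤ) + 2 := by push_cast; ring
    rw [hcast]
    calc ν (Mset Fq ((j:ℤ)+2))
        = (Fintype.card Fq : ℝ≥0∞)⁻¹ * ((Fintype.card Fq : ℝ≥0∞) * ν (Mset Fq ((j:ℤ)+2))) := by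
          rw [← mul_assoc, ENNReal.inv_mul_cancel hcard0 hcardtop, one_mul]
      _ = (Fintype.card Fq : ℝ≥0∞)⁻¹ * (Fintype.card Fq : ℝ≥0∞)⁻¹ ^ j := by rw [← hcount, ih]
      _ = _ := by rw [pow_succ]; ring

lemma vball_pi {m : ℕ} (ν : Measure (Kinf Fq)) [SigmaFinite ν] [ν.IsAddLeftInvariant]
    (hν : ν (mfrak Fq) = 1) (n : ℕ) (c : Fin m → Kinf Fq) :
    MeasurableSet {α : Fin m → Kinf Fq | vnorm Fq (α - c) ≤ qc Fq ^ (-((n:ℤ)+1))} ∧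
    Measure.pi (fun _ : Fin m => ν) {α | vnorm Fq (α - c) ≤ qc Fq ^ (-((n:ℤ)+1))}
      = ((Fintype.card Fq : ℝ≥0∞)⁻¹ ^ n) ^ m := by
  have hset : {α : Fin m → Kinf Fq | vnorm Fq (α - c) ≤ qc Fq ^ (-((n:ℤ)+1))}
      = Set.pi Set.univ (fun i => (fun β => -(c i) + β) ⁻¹' Mset Fq ((n:ℤ)+1)) := by
    ext α
    rw [Set.mem_setOf_eq, Set.mem_univ_pi, vnorm_le_iff Fq]
    apply forall_congr'
    intro i
    simp only [Set.mem_preimage, Mset, Set.mem_setOf_eq, Pi.sub_apply, neg_add_eq_sub]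
  constructor
  · rw [hset]
    exact MeasurableSet.univ_pi fun i =>
      (measurableSet_Mset Fq _).preimage (measurable_const_add _)
  · rw [hset, Measure.pi_pi]
    have hcoord : ∀ i : Fin m, ν ((fun β => -(c i) + β) ⁻¹' Mset Fq ((n:ℤ)+1))
        = (Fintype.card Fq : ℝ≥0∞)⁻¹ ^ n := fun i => by
      rw [measure_preimage_add, measure_Mset Fq ν hν n]
    simp_rw [hcoord]
    rw [Finset.prod_const, Finset.card_univ, Fintype.card_fin]

end MeasureAux

section Finiteness

lemma finite_polyLT (n : ℕ) : {p : Polynomial Fq | p.degree < (n : ℕ)}.Finite := by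
  have h : Set.InjOn (fun p : Polynomial Fq => fun j : Fin n => p.coeff j)
      {p : Polynomial Fq | p.degree < (n : ℕ)} := by
    intro p hp q hq hpq
    ext k
    by_cases hk : k < n
    · exact congrFun hpq ⟨k, hk⟩
    · rw [Polynomial.coeff_eq_zero_of_degree_lt, Polynomial.coeff_eq_zero_of_degree_lt]
      · exact lt_of_lt_of_le hq (by exact_mod_cast Nat.cast_le.mpr (le_of_not_gt hk))
      · exact lt_of_lt_of_le hp (by exact_mod_cast Nat.cast_le.mpr (le_of_not_gt hk))
  exact Set.Finite.of_finite_image (Set.toFinite _) h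

lemma finite_polyVecLT (m n : ℕ) : (polyVecLT Fq m n).Finite := by
  have hsub : polyVecLT Fq m n ⊆
      Set.pi Set.univ (fun _ : Fin m => {p : Polynomial Fq | p.degree < (n : ℕ)}) := by
    intro a ha
    rw [Set.mem_univ_pi]
    exact ha
  exact (Set.Finite.pi fun _ => finite_polyLT Fq n).subset hsub

end Finiteness

/-- Theorem 1.1: for every infinite set `S` of monic polynomials, every
dimension `m`, every `n`, every `N` of degree `n` and every `0 ≤ k ≤ m_S(n)`, the uniform
probability that `a ∈ R_{<n}^m` has `d_{N,S}(a) = k` equals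
`ν_m({α ∈ 𝔪^m : deg_{min,S}(α, q^{-n}) = k})`. -/
theorem stmt0 (S : Set (Polynomial Fq)) (hSinf : S.Infinite) (hSmonic : ∀ Q ∈ S, Q.Monic)
    [MeasurableSpace (Kinf Fq)] [BorelSpace (Kinf Fq)]
    (ν : Measure (Kinf Fq)) [SigmaFinite ν] [ν.IsAddLeftInvariant]
    (hν : ν (mfrak Fq) = 1)
    (m n : ℕ) (N : Polynomial Fq) (hN : N.degree = (n : WithBot ℕ))
    (k : ℕ) (hk : k ≤ mS Fq S n) :
    (Set.ncard {a ∈ polyVecLT Fq m n | dN Fq S m N a = k} : ℝ≥0∞)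
        / (Fintype.card Fq : ℝ≥0∞) ^ (m * n)
      = Measure.pi (fun _ : Fin m => ν)
          {α ∈ mfrakV Fq m | degMin Fq S m n α = k} := by
  have hN0 : N ≠ 0 := fun h => by simp [h] at hN
  have hNd : N.natDegree = n := Polynomial.natDegree_eq_of_degree_eq_some hN
  set A : Set (Fin m → Polynomial Fq) := {a ∈ polyVecLT Fq m n | dN Fq S m N a = k} with hA
  set B : (Fin m → Polynomial Fq) → Set (Fin m → Kinf Fq) :=
    fun a => {α | vnorm Fq (α - ratV Fq a N) ≤ qc Fq ^ (-((n:ℤ)+1))} with hB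
  have hBvol : ∀ a : Fin m → Polynomial Fq,
      Measure.pi (fun _ : Fin m => ν) (B a) = ((Fintype.card Fq : ℝ≥0∞)⁻¹ ^ n) ^ m :=
    fun a => (vball_pi Fq ν hν n (ratV Fq a N)).2
  have hBmeas : ∀ a : Fin m → Polynomial Fq, MeasurableSet (B a) :=
    fun a => (vball_pi Fq ν hν n (ratV Fq a N)).1
  have hBdegMin : ∀ a (α : Fin m → Kinf Fq), α ∈ B a →
      degMin Fq S m n α = dN Fq S m N a := by
    intro a α hα
    rw [degMin_congr Fq S (α' := ratV Fq a N) hα]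
    simp only [dN, hNd]
  have hBmfrak : ∀ a ∈ polyVecLT Fq m n, B a ⊆ mfrakV Fq m := by
    intro a ha α hα i
    exact ball_in_mfrak Fq hN (ha i) (le_trans (fabs_le_vnorm Fq (α - ratV Fq a N) i) hα)
  have hcover : ∀ α ∈ mfrakV Fq m, ∃ a ∈ polyVecLT Fq m n, α ∈ B a := by
    intro α hα
    choose a hdeg hfa using fun i => exists_center Fq hN (hα i)
    exact ⟨a, hdeg, (vnorm_le_iff Fq).mpr fun i => hfa i⟩
  have hdisjB : ∀ a b : Fin m → Polynomial Fq, a ≠ b → Disjoint (B a) (B b) := by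
    intro a b hab
    rw [Set.disjoint_left]
    intro α hαa hαb
    obtain ⟨i, hi⟩ := Function.ne_iff.mp hab
    apply centers_apart Fq hN hi
    have h := fabs_add_le Fq (ratV Fq a N i - α i) (α i - ratV Fq b N i)
    rw [sub_add_sub_cancel] at h
    refine le_trans h (max_le ?_ ?_)
    · rw [show ratV Fq a N i - α i = -((α - ratV Fq a N) i) by simp, fabs_neg]
      exact le_trans (fabs_le_vnorm Fq (α - ratV Fq a N) i) hαa
    · exact le_trans (fabs_le_vnorm Fq (α - ratV Fq b N) i) hαb
  have hT : {α ∈ mfrakV Fq m | degMin Fq S m n α = k} = ⋃ a ∈ A, B a := by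
    ext α
    simp only [Set.mem_setOf_eq, Set.mem_iUnion, exists_prop]
    constructor
    · rintro ⟨hα, hdeg⟩
      obtain ⟨a, ha, hBa⟩ := hcover α hα
      refine ⟨a, ⟨ha, ?_⟩, hBa⟩
      rw [← hBdegMin a α hBa, hdeg]
    · rintro ⟨a, ⟨ha, hk'⟩, hBa⟩
      exact ⟨hBmfrak a ha hBa, by rw [hBdegMin a α hBa, hk']⟩
  have hAfin : A.Finite := (finite_polyVecLT Fq m n).subset (Set.sep_subset _ _)
  have hUnion : (⋃ a ∈ A, B a) = ⋃ a ∈ hAfin.toFinset, B a := by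
    ext α
    simp [hAfin.mem_toFinset]
  rw [hT, hUnion, measure_biUnion_finset (fun a _ b _ hab => hdisjB a b hab)
    (fun a _ => hBmeas a)]
  rw [Finset.sum_congr rfl (fun a _ => hBvol a), Finset.sum_const, nsmul_eq_mul]
  rw [show ((hAfin.toFinset.card : ℕ) : ℝ≥0∞) = (A.ncard : ℝ≥0∞) by
    rw [Set.ncard_eq_toFinset_card _ hAfin]]
  rw [div_eq_mul_inv]
  congr 1
  rw [ENNReal.inv_pow, ← pow_mul, mul_comm n m]
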